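/- arXiv:2102.05093 — 4 statements merged into one kernel-verified Lean document; each statement's English description precedes it below -/
import Mathlib

section
/- Let L ∈ (2π, 4π), set ε_L := (2π/L)² − (2π/L)⁴, B := (4π/L)⁴ − (4π/L)², M₁ := 12 B L⁴/π⁴, and let ε > 0 satisfy ε_L ≤ ε and 3 L⁴ ε ≤ π⁴ M₁ (equivalently L⁴ε²/(4π⁴) ≤ M₁ε/12). Then for all a, b ∈ ℝ with a² + b² ≥ M₁ ε / 6, one has (ε_L/2 − ε) a² − 2B b² − (L²εB/π²) b < 0. -/
open Real

lemma key_aux (B C e ε a b : ℝ) (hB : 0 < B) (hC : 0 < C) (hε : 0 < ε)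
    (he : e ≤ ε) (hε4B : ε ≤ 4 * B) (hab : a ^ 2 + b ^ 2 ≥ 2 * B * C ^ 2 * ε) :
    (e / 2 - ε) * a ^ 2 - 2 * B * b ^ 2 - C * ε * B * b < 0 := by
  nlinarith [mul_nonneg hB.le (sq_nonneg (3 * b + C * ε)),
    mul_nonneg (sub_nonneg.mpr he) (sq_nonneg a),
    mul_nonneg (sub_nonneg.mpr hε4B) (sq_nonneg b),
    mul_le_mul_of_nonneg_left hab hε.le,
    mul_pos (mul_pos hB (pow_pos hC 2)) (pow_pos hε 2)]

/-- Negativity of the piece `Υ₁` of the derivative of the Lyapunov function in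
Goodman's forced toy model. -/
theorem stmt_5 (L ε : ℝ) (hL₁ : 2 * π < L) (hL₂ : L < 4 * π) (hε : 0 < ε)
    (hεL : (2 * π / L) ^ 2 - (2 * π / L) ^ 4 ≤ ε)
    (hsmall : 3 * L ^ 4 * ε ≤
      π ^ 4 * (12 * ((4 * π / L) ^ 4 - (4 * π / L) ^ 2) * L ^ 4 / π ^ 4)) :
    ∀ a b : ℝ,
      a ^ 2 + b ^ 2 ≥ (12 * ((4 * π / L) ^ 4 - (4 * π / L) ^ 2) * L ^ 4 / π ^ 4) * ε / 6 →
      (((2 * π / L) ^ 2 - (2 * π / L) ^ 4) / 2 - ε) * a ^ 2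
        - 2 * ((4 * π / L) ^ 4 - (4 * π / L) ^ 2) * b ^ 2
        - (L ^ 2 * ε * ((4 * π / L) ^ 4 - (4 * π / L) ^ 2) / π ^ 2) * b < 0 := by
  intro a b hab
  have hπ : (0 : ℝ) < π := pi_pos
  have hL0 : (0 : ℝ) < L := lt_trans (by positivity) hL₁
  have hq : 1 < 4 * π / L := (one_lt_div hL0).mpr (by linarith)
  set B : ℝ := (4 * π / L) ^ 4 - (4 * π / L) ^ 2 with hBdef
  have hB : 0 < B := by
    rw [hBdef]
    have hq2 : 1 < (4 * π / L) ^ 2 := by nlinarith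
    nlinarith [mul_pos (show (0:ℝ) < (4 * π / L) ^ 2 by positivity) (sub_pos.mpr hq2)]
  set C : ℝ := L ^ 2 / π ^ 2 with hCdef
  have hC : 0 < C := by positivity
  have hε4B : ε ≤ 4 * B := by
    have hπ4 : (0 : ℝ) < π ^ 4 := by positivity
    have hL4 : (0 : ℝ) < L ^ 4 := by positivity
    rw [hBdef]
    have h : 3 * L ^ 4 * ε ≤ 12 * ((4 * π / L) ^ 4 - (4 * π / L) ^ 2) * L ^ 4 := by
      calc 3 * L ^ 4 * ε ≤ π ^ 4 * (12 * ((4 * π / L) ^ 4 - (4 * π / L) ^ 2) * L ^ 4 / π ^ 4) := hsmall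
        _ = 12 * ((4 * π / L) ^ 4 - (4 * π / L) ^ 2) * L ^ 4 := by field_simp
    nlinarith
  have hcoef : L ^ 2 * ε * B / π ^ 2 = C * ε * B := by
    rw [hCdef]; ring
  have hab' : a ^ 2 + b ^ 2 ≥ 2 * B * C ^ 2 * ε := by
    have : (12 * B * L ^ 4 / π ^ 4) * ε / 6 = 2 * B * C ^ 2 * ε := by
      rw [hCdef]; field_simp; ring
    linarith [hab, this ▸ hab]
  have := key_aux B C ((2 * π / L) ^ 2 - (2 * π / L) ^ 4) ε a b hB hC hε hεL hε4B hab'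
  calc (((2 * π / L) ^ 2 - (2 * π / L) ^ 4) / 2 - ε) * a ^ 2 - 2 * B * b ^ 2
        - (L ^ 2 * ε * B / π ^ 2) * b
      = (((2 * π / L) ^ 2 - (2 * π / L) ^ 4) / 2 - ε) * a ^ 2 - 2 * B * b ^ 2
        - C * ε * B * b := by rw [hcoef]
    _ < 0 := this
end

section
/- Let L₁, L₂ ∈ (2π, 4π) satisfy (2π/L₁)² + (2π/L₂)² > 1, define σ(k,j) := −((2πk/L₁)² + (2πj/L₂)²)² + (2πk/L₁)² + (2πj/L₂)², and let A := {(0,0), (±1,0), (±2,0), (0,±1), (0,±2)} ⊂ ℤ². Then there exists a finite constant K₁ > 0 such that for every (k,j) ∈ ℤ² \ A one has σ(k,j) < 0 and 1 + |k| + |j| ≤ K₁ · (−σ(k,j)); that is, the supremum of (1+|k|+|j|)/(−σ(k,j)) over (k,j) ∈ ℤ² \ A is finite and positive. -/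
open Real

/-- The Fourier symbol of the linearized Kuramoto–Sivashinsky operator `−Δ² − Δ`
on the torus `[0,L₁] × [0,L₂]`. -/
noncomputable def ksSymbol (L₁ L₂ : ℝ) (p : ℤ × ℤ) : ℝ :=
  -((2 * π * p.1 / L₁) ^ 2 + (2 * π * p.2 / L₂) ^ 2) ^ 2
    + (2 * π * p.1 / L₁) ^ 2 + (2 * π * p.2 / L₂) ^ 2

/-- The set of specially treated low and intermediate wavenumbers. -/
def ksLowModes : Set (ℤ × ℤ) :=
  {(0, 0), (1, 0), (-1, 0), (2, 0), (-2, 0), (0, 1), (0, -1), (0, 2), (0, -2)}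

set_option maxHeartbeats 1600000 in
/-- Finiteness and positivity of the constant `K₁`: outside the special modes the
symbol is negative and dominates `1 + |k| + |j|` up to a constant. -/
theorem stmt_12 (L₁ L₂ : ℝ) (hL₁ : 2 * π < L₁) (hL₁' : L₁ < 4 * π)
    (hL₂ : 2 * π < L₂) (hL₂' : L₂ < 4 * π)
    (hsum : (2 * π / L₁) ^ 2 + (2 * π / L₂) ^ 2 > 1) :
    ∃ K₁ : ℝ, 0 < K₁ ∧
      ∀ p : ℤ × ℤ, p ∉ ksLowModes →
        ksSymbol L₁ L₂ p < 0 ∧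
        1 + |(p.1 : ℝ)| + |(p.2 : ℝ)| ≤ K₁ * (-(ksSymbol L₁ L₂ p)) := by
  have hπ := Real.pi_pos
  have hL₁0 : 0 < L₁ := by linarith
  have hL₂0 : 0 < L₂ := by linarith
  set a := (2 * π / L₁) ^ 2 with ha
  set b := (2 * π / L₂) ^ 2 with hb
  have ha1 : 1 / 4 < a := by
    have h : 1 / 2 < 2 * π / L₁ := by rw [lt_div_iff₀ hL₁0]; linarith
    nlinarith
  have ha2 : a < 1 := by
    have h : 2 * π / L₁ < 1 := by rw [div_lt_one hL₁0]; linarith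
    have h0 : 0 < 2 * π / L₁ := by positivity
    nlinarith
  have hb1 : 1 / 4 < b := by
    have h : 1 / 2 < 2 * π / L₂ := by rw [lt_div_iff₀ hL₂0]; linarith
    nlinarith
  have hb2 : b < 1 := by
    have h : 2 * π / L₂ < 1 := by rw [div_lt_one hL₂0]; linarith
    have h0 : 0 < 2 * π / L₂ := by positivity
    nlinarith
  set δ := a + b - 1 with hδdef
  have hδ : 0 < δ := by simp only [hδdef]; linarith [hsum]
  refine ⟨16 / δ, by positivity, ?_⟩
  rintro ⟨k, j⟩ hp
  set K := |(k : ℝ)| with hK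
  set J := |(j : ℝ)| with hJ
  have hK0 : 0 ≤ K := abs_nonneg _
  have hJ0 : 0 ≤ J := abs_nonneg _
  set s := a * (k : ℝ) ^ 2 + b * (j : ℝ) ^ 2 with hs
  have hsym : ksSymbol L₁ L₂ (k, j) = s - s ^ 2 := by
    have e1 : (2 * π * (k : ℝ) / L₁) ^ 2 = a * (k : ℝ) ^ 2 := by rw [ha]; ring
    have e2 : (2 * π * (j : ℝ) / L₂) ^ 2 = b * (j : ℝ) ^ 2 := by rw [hb]; ring
    simp only [ksSymbol, hs, e1, e2]
    ring
  have hKsq : K ^ 2 = (k : ℝ) ^ 2 := sq_abs _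
  have hJsq : J ^ 2 = (j : ℝ) ^ 2 := sq_abs _
  have hs' : s = a * K ^ 2 + b * J ^ 2 := by rw [hs, hKsq, hJsq]
  -- extract case information from non-membership
  simp only [ksLowModes, Set.mem_insert_iff, Set.mem_singleton_iff, Prod.mk.injEq,
    not_or, not_and] at hp
  clear_value a b δ K J s
  clear ha hb hs hsum hL₁ hL₁' hL₂ hL₂' hπ hL₁0 hL₂0
  have hcases : (k = 0 ∧ 3 ≤ j.natAbs) ∨ (j = 0 ∧ 3 ≤ k.natAbs) ∨
      (1 ≤ k.natAbs ∧ 1 ≤ j.natAbs) := by omega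
  -- in all cases: δ ≤ s - 1 and 1 + K + J ≤ 16 * s
  have key : δ ≤ s - 1 ∧ 1 + K + J ≤ 16 * s := by
    rcases hcases with ⟨hk0, hj3⟩ | ⟨hj0, hk3⟩ | ⟨hk1, hj1⟩
    · have hJ3 : (3 : ℝ) ≤ J := by
        rw [hJ]; have : (3:ℤ) ≤ |j| := by rw [Int.abs_eq_natAbs]; exact_mod_cast hj3
        exact_mod_cast this
      have hK00 : K = 0 := by rw [hK, hk0]; simp
      rw [hs', hK00]
      constructor
      · nlinarith
      · nlinarith
    · have hK3 : (3 : ℝ) ≤ K := by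
        rw [hK]; have : (3:ℤ) ≤ |k| := by rw [Int.abs_eq_natAbs]; exact_mod_cast hk3
        exact_mod_cast this
      have hJ00 : J = 0 := by rw [hJ, hj0]; simp
      rw [hs', hJ00]
      constructor
      · nlinarith
      · nlinarith
    · have hK1 : (1 : ℝ) ≤ K := by
        rw [hK]; have : (1:ℤ) ≤ |k| := by rw [Int.abs_eq_natAbs]; exact_mod_cast hk1
        exact_mod_cast this
      have hJ1 : (1 : ℝ) ≤ J := by
        rw [hJ]; have : (1:ℤ) ≤ |j| := by rw [Int.abs_eq_natAbs]; exact_mod_cast hj1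
        exact_mod_cast this
      rw [hs']
      have hK2 : 1 ≤ K ^ 2 := by nlinarith
      have hJ2 : 1 ≤ J ^ 2 := by nlinarith
      have ha0 : (0:ℝ) ≤ a := by linarith
      have hb0 : (0:ℝ) ≤ b := by linarith
      have q1 : a * 1 ≤ a * K ^ 2 := mul_le_mul_of_nonneg_left hK2 ha0
      have q2 : b * 1 ≤ b * J ^ 2 := mul_le_mul_of_nonneg_left hJ2 hb0
      have q3 : 1 / 4 * K ^ 2 ≤ a * K ^ 2 :=
        mul_le_mul_of_nonneg_right ha1.le (sq_nonneg K)
      have q4 : 1 / 4 * J ^ 2 ≤ b * J ^ 2 :=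
        mul_le_mul_of_nonneg_right hb1.le (sq_nonneg J)
      have q5 : 0 ≤ (K - 1) ^ 2 := sq_nonneg _
      have q6 : 0 ≤ (J - 1) ^ 2 := sq_nonneg _
      constructor
      · linarith
      · nlinarith
  obtain ⟨h1, h2⟩ := key
  have hspos : 0 < s := by linarith
  constructor
  · rw [hsym]; nlinarith
  · rw [hsym]
    have hgoal : (1 + K + J) * δ ≤ 16 * (-(s - s ^ 2)) := by
      have t1 : (1 + K + J) * δ ≤ 16 * s * δ := by
        apply mul_le_mul_of_nonneg_right h2 hδ.le
      have t2 : 16 * s * δ ≤ 16 * s * (s - 1) := by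
        apply mul_le_mul_of_nonneg_left h1 (by positivity)
      nlinarith
    rw [div_mul_eq_mul_div, le_div_iff₀ hδ]
    linarith
end

section
/- Let L₁, L₂ ∈ (2π, 4π) satisfy (2π/L₁)² + (2π/L₂)² > 1, define σ(k,j) := −((2πk/L₁)² + (2πj/L₂)²)² + (2πk/L₁)² + (2πj/L₂)², let A := {(0,0), (±1,0), (±2,0), (0,±1), (0,±2)} ⊂ ℤ², and let K₁ > 0 satisfy 1 + |k| + |j| ≤ K₁ · (−σ(k,j)) for all (k,j) ∈ ℤ² \ A. Let ρ ≥ 0 and let h : ℤ² \ A → ([0,∞) → ℂ) be a family of continuous bounded functions with N_h := ∑_{(k,j)∈ℤ²\A} e^{ρ(|k|+|j|)} sup_{t≥0} |h_{k,j}(t)| < ∞. Define u_{k,j}(t) := ∫₀ᵗ e^{σ(k,j)(t−s)} h_{k,j}(s) ds for (k,j) ∈ ℤ² \ A and t ≥ 0. Then ∑_{(k,j)∈ℤ²\A} e^{ρ(|k|+|j|)} (1+|k|+|j|) sup_{t≥0} |u_{k,j}(t)| ≤ K₁ · N_h. -/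
open Real

lemma exp_int_le (σ : ℝ) (hσ : σ < 0) (t : ℝ) :
    ∫ s in (0:ℝ)..t, Real.exp (σ * (t - s)) ≤ 1 / (-σ) := by
  have hne : σ ≠ 0 := ne_of_lt hσ
  have h1 : (∫ s in (0:ℝ)..t, Real.exp (σ * (t - s)))
      = ∫ s in (0:ℝ)..t, Real.exp (σ * s) := by
    have := intervalIntegral.integral_comp_sub_left (a := (0:ℝ)) (b := t)
      (fun s => Real.exp (σ * s)) t
    simpa using this
  have h2 : (∫ s in (0:ℝ)..t, Real.exp (σ * s)) = σ⁻¹ * (Real.exp (σ * t) - 1) := by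
    have := intervalIntegral.integral_comp_mul_left (a := (0:ℝ)) (b := t)
      (fun s => Real.exp s) hne
    simp only [mul_zero, integral_exp, Real.exp_zero, smul_eq_mul] at this
    rw [this]
  have he : 0 < Real.exp (σ * t) := Real.exp_pos _
  have hinv : σ⁻¹ * σ = 1 := inv_mul_cancel₀ hne
  have h3 : σ⁻¹ * (Real.exp (σ * t) - 1) = (1 - Real.exp (σ * t)) / (-σ) := by
    rw [eq_div_iff (neg_ne_zero.mpr hne)]
    linear_combination (1 - Real.exp (σ * t)) * hinv
  rw [h1, h2, h3]
  gcongr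
  · linarith
  · linarith

/-- Bound on the Duhamel integral for a single mode. -/
lemma duhamel_bound (σ : ℝ) (hσ : σ < 0) (g : ℝ → ℂ) (hg : Continuous g)
    (M : ℝ) (hM : ∀ s : ℝ, 0 ≤ s → ‖g s‖ ≤ M)
    (t : ℝ) (ht : 0 ≤ t) :
    ‖∫ s in (0:ℝ)..t, (Real.exp (σ * (t - s)) : ℂ) * g s‖ ≤ M / (-σ) := by
  have hM0 : 0 ≤ M := le_trans (norm_nonneg _) (hM 0 le_rfl)
  have hre : Continuous fun s : ℝ => Real.exp (σ * (t - s)) :=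
    Real.continuous_exp.comp (continuous_const.mul (continuous_const.sub continuous_id))
  have hcont : Continuous fun s : ℝ => (Real.exp (σ * (t - s)) : ℂ) * g s :=
    (Complex.continuous_ofReal.comp hre).mul hg
  calc ‖∫ s in (0:ℝ)..t, (Real.exp (σ * (t - s)) : ℂ) * g s‖
      ≤ ∫ s in (0:ℝ)..t, ‖(Real.exp (σ * (t - s)) : ℂ) * g s‖ := by
        exact intervalIntegral.norm_integral_le_integral_norm ht
    _ ≤ ∫ s in (0:ℝ)..t, Real.exp (σ * (t - s)) * M := by
        apply intervalIntegral.integral_mono_on ht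
        · exact (hcont.norm).intervalIntegrable _ _
        · exact (hre.mul continuous_const).intervalIntegrable _ _
        · intro s hs
          rw [norm_mul, Complex.norm_real, Real.norm_eq_abs, abs_of_pos (Real.exp_pos _)]
          exact mul_le_mul_of_nonneg_left (hM s hs.1) (Real.exp_pos _).le
    _ = (∫ s in (0:ℝ)..t, Real.exp (σ * (t - s))) * M := by
        rw [intervalIntegral.integral_mul_const]
    _ ≤ (1 / (-σ)) * M := by
        exact mul_le_mul_of_nonneg_right (exp_int_le σ hσ t) hM0
    _ = M / (-σ) := by ring

/-- The Duhamel integral operator `I⁺` is bounded from `𝓑⁰_ρ` to `𝓑¹_ρ`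
with norm at most `K₁`. -/
theorem stmt_13 (L₁ L₂ : ℝ) (hL₁ : 2 * π < L₁) (hL₁' : L₁ < 4 * π)
    (hL₂ : 2 * π < L₂) (hL₂' : L₂ < 4 * π)
    (hsum : (2 * π / L₁) ^ 2 + (2 * π / L₂) ^ 2 > 1)
    (K₁ : ℝ) (hK₁pos : 0 < K₁)
    (hK₁ : ∀ p : ℤ × ℤ, p ∉ ksLowModes →
      1 + |(p.1 : ℝ)| + |(p.2 : ℝ)| ≤ K₁ * (-(ksSymbol L₁ L₂ p)))
    (ρ : ℝ) (hρ : 0 ≤ ρ) (h : ℤ × ℤ → ℝ → ℂ)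
    (hcont : ∀ p : {p : ℤ × ℤ // p ∉ ksLowModes}, Continuous (h p.1))
    (hbdd : ∀ p : {p : ℤ × ℤ // p ∉ ksLowModes},
      BddAbove (Set.range fun t : {t : ℝ // 0 ≤ t} => ‖h p.1 t.1‖))
    (hsumm : Summable (fun p : {p : ℤ × ℤ // p ∉ ksLowModes} =>
      Real.exp (ρ * (|(p.1.1 : ℝ)| + |(p.1.2 : ℝ)|)) *
        ⨆ t : {t : ℝ // 0 ≤ t}, ‖h p.1 t.1‖)) :
    (∑' p : {p : ℤ × ℤ // p ∉ ksLowModes},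
        Real.exp (ρ * (|(p.1.1 : ℝ)| + |(p.1.2 : ℝ)|)) *
          (1 + |(p.1.1 : ℝ)| + |(p.1.2 : ℝ)|) *
          ⨆ t : {t : ℝ // 0 ≤ t},
            ‖∫ s in (0:ℝ)..(t.1),
              (Real.exp (ksSymbol L₁ L₂ p.1 * (t.1 - s)) : ℂ) * h p.1 s‖) ≤
      K₁ * ∑' p : {p : ℤ × ℤ // p ∉ ksLowModes},
        Real.exp (ρ * (|(p.1.1 : ℝ)| + |(p.1.2 : ℝ)|)) *
          ⨆ t : {t : ℝ // 0 ≤ t}, ‖h p.1 t.1‖ := by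
  haveI : Nonempty {t : ℝ // 0 ≤ t} := ⟨⟨0, le_rfl⟩⟩
  set w : {p : ℤ × ℤ // p ∉ ksLowModes} → ℝ :=
    fun p => Real.exp (ρ * (|(p.1.1 : ℝ)| + |(p.1.2 : ℝ)|)) with hw
  set M : {p : ℤ × ℤ // p ∉ ksLowModes} → ℝ :=
    fun p => ⨆ t : {t : ℝ // 0 ≤ t}, ‖h p.1 t.1‖ with hMdef
  -- termwise bound
  have hterm : ∀ p : {p : ℤ × ℤ // p ∉ ksLowModes},
      w p * (1 + |(p.1.1 : ℝ)| + |(p.1.2 : ℝ)|) *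
        (⨆ t : {t : ℝ // 0 ≤ t},
          ‖∫ s in (0:ℝ)..(t.1),
            (Real.exp (ksSymbol L₁ L₂ p.1 * (t.1 - s)) : ℂ) * h p.1 s‖) ≤
      K₁ * (w p * M p) := by
    intro p
    set σ := ksSymbol L₁ L₂ p.1 with hσdef
    have habs : (0:ℝ) < 1 + |(p.1.1 : ℝ)| + |(p.1.2 : ℝ)| := by positivity
    have hK : 1 + |(p.1.1 : ℝ)| + |(p.1.2 : ℝ)| ≤ K₁ * (-σ) := hK₁ p.1 p.2
    have hσpos : 0 < -σ := by
      by_contra hc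
      push_neg at hc
      nlinarith
    have hσneg : σ < 0 := by linarith
    have hMb : ∀ s : ℝ, 0 ≤ s → ‖h p.1 s‖ ≤ M p := by
      intro s hs
      exact le_ciSup (hbdd p) ⟨s, hs⟩
    have hM0 : 0 ≤ M p := le_trans (norm_nonneg _) (hMb 0 le_rfl)
    have hsupb : (⨆ t : {t : ℝ // 0 ≤ t},
        ‖∫ s in (0:ℝ)..(t.1),
          (Real.exp (σ * (t.1 - s)) : ℂ) * h p.1 s‖) ≤ M p / (-σ) := by
      apply ciSup_le
      intro t
      exact duhamel_bound σ hσneg (h p.1) (hcont p) (M p) hMb t.1 t.2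
    have hwpos : 0 < w p := Real.exp_pos _
    calc w p * (1 + |(p.1.1 : ℝ)| + |(p.1.2 : ℝ)|) *
          (⨆ t : {t : ℝ // 0 ≤ t},
            ‖∫ s in (0:ℝ)..(t.1),
              (Real.exp (σ * (t.1 - s)) : ℂ) * h p.1 s‖)
        ≤ w p * (K₁ * (-σ)) * (M p / (-σ)) := by
          apply mul_le_mul
          · exact mul_le_mul_of_nonneg_left hK hwpos.le
          · exact hsupb
          · exact Real.iSup_nonneg fun t => norm_nonneg _
          · positivity
      _ = K₁ * (w p * M p) := by
          have hne' : (-σ) ≠ 0 := ne_of_gt hσpos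
          have hinv2 : σ * σ⁻¹ = 1 := mul_inv_cancel₀ (ne_of_lt hσneg)
          rw [mul_div_assoc', div_eq_iff hne']
          ring
  have hnonneg : ∀ p : {p : ℤ × ℤ // p ∉ ksLowModes},
      0 ≤ w p * (1 + |(p.1.1 : ℝ)| + |(p.1.2 : ℝ)|) *
        (⨆ t : {t : ℝ // 0 ≤ t},
          ‖∫ s in (0:ℝ)..(t.1),
            (Real.exp (ksSymbol L₁ L₂ p.1 * (t.1 - s)) : ℂ) * h p.1 s‖) := by
    intro p
    apply mul_nonneg (by positivity)
    exact Real.iSup_nonneg fun t => norm_nonneg _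
  have hRsumm : Summable (fun p : {p : ℤ × ℤ // p ∉ ksLowModes} => K₁ * (w p * M p)) :=
    hsumm.mul_left K₁
  have hLsumm : Summable (fun p : {p : ℤ × ℤ // p ∉ ksLowModes} =>
      w p * (1 + |(p.1.1 : ℝ)| + |(p.1.2 : ℝ)|) *
        (⨆ t : {t : ℝ // 0 ≤ t},
          ‖∫ s in (0:ℝ)..(t.1),
            (Real.exp (ksSymbol L₁ L₂ p.1 * (t.1 - s)) : ℂ) * h p.1 s‖)) :=
    Summable.of_nonneg_of_le hnonneg hterm hRsumm
  calc (∑' p : {p : ℤ × ℤ // p ∉ ksLowModes},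
        w p * (1 + |(p.1.1 : ℝ)| + |(p.1.2 : ℝ)|) *
          (⨆ t : {t : ℝ // 0 ≤ t},
            ‖∫ s in (0:ℝ)..(t.1),
              (Real.exp (ksSymbol L₁ L₂ p.1 * (t.1 - s)) : ℂ) * h p.1 s‖))
      ≤ ∑' p : {p : ℤ × ℤ // p ∉ ksLowModes}, K₁ * (w p * M p) :=
        Summable.tsum_le_tsum hterm hLsumm hRsumm
    _ = K₁ * ∑' p : {p : ℤ × ℤ // p ∉ ksLowModes}, w p * M p := tsum_mul_left
end

section
/- Fix ρ > 0. Let L₁, L₂ ∈ (2π, 4π) with (2π/L₁)² + (2π/L₂)² > 1, and define εᵢ, Bᵢ, M_{1,i} := 12 Bᵢ Lᵢ⁴/π⁴, M_{2,i} := 8π² M_{1,i}/Lᵢ², σ(k,j), A := {(0,0), (±1,0), (±2,0), (0,±1), (0,±2)}, K₁, K₂, and M₃ := 12 K₁ K₂ · max(M_{1,1}^{1/2} M_{2,1}, M_{1,2}^{1/2} M_{2,2}) as in the iterative scheme for the two-dimensional Kuramoto–Sivashinsky equation, and set K := 3 M_{1,1}^{1/2} M₃ K₂ e^{−ρ}.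 Then there exists ε* > 0 (depending only on ρ, L₁, L₂) such that for every ε ∈ (0, ε*) the following holds. Suppose a₁, a₂ : [0,∞) → ℝ satisfy sup_{t≥0}|a₁(t)| ≤ 2(M_{1,1} ε)^{1/2} and sup_{t≥0}|a₂(t)| ≤ M_{2,1} ε, and suppose v : ℤ² \ A → ([0,∞) → ℝ) satisfies ∑_{(k,j)∈ℤ²\A} e^{ρ(|k|+|j|)}(1+|k|+|j|) sup_{t≥0}|v_{k,j}(t)| ≤ M₃ ε^{3/2}. Let w(·,·,t) be the function on the torus with Fourier coefficients v, and let F(t) denote the coefficient of cos(2πx/L₁) in the Fourier expansion of Ψ₃ + Ψ₅ + Ψ₆ at time t, where Ψ₃ := (∂ₓw)², Ψ₅ := −(4π a₁(t)/L₁) sin(2πx/L₁) ∂ₓw, and Ψ₆ := −(8π a₂(t)/L₁) sin(4πx/L₁) ∂ₓw. Then sup_{t≥0} |F(t)| ≤ K ε². -/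
open Real

/-- `B_i = (4π/L)⁴ − (4π/L)²`. -/
noncomputable def ksB (L : ℝ) : ℝ := (4 * π / L) ^ 4 - (4 * π / L) ^ 2

/-- `M_{1,i} = 12 B_i L⁴ / π⁴`. -/
noncomputable def ksM₁ (L : ℝ) : ℝ := 12 * ksB L * L ^ 4 / π ^ 4

/-- `M_{2,i} = 8π² M_{1,i} / L²`. -/
noncomputable def ksM₂ (L : ℝ) : ℝ := 8 * π ^ 2 * ksM₁ L / L ^ 2

/-- `K₂` is the maximum of the eight explicit `𝓑⁰_ρ`-norms of the trigonometric
profiles appearing in the scheme. -/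
noncomputable def ksK₂ (ρ L₁ L₂ : ℝ) : ℝ :=
  max
    (max (max ((8 * π ^ 2 / L₁ ^ 2) * (Real.exp ρ + Real.exp (3 * ρ)))
              ((8 * π ^ 2 / L₁ ^ 2) * (1 + Real.exp (4 * ρ))))
         (max ((4 * π / L₁) * Real.exp ρ) ((8 * π / L₁) * Real.exp (2 * ρ))))
    (max (max ((8 * π ^ 2 / L₂ ^ 2) * (Real.exp ρ + Real.exp (3 * ρ)))
              ((8 * π ^ 2 / L₂ ^ 2) * (1 + Real.exp (4 * ρ))))
         (max ((4 * π / L₂) * Real.exp ρ) ((8 * π / L₂) * Real.exp (2 * ρ))))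

/-- The exponential Fourier coefficients of `∂ₓ w`, where `w` has real
coefficients `v` on the torus `[0,L₁] × [0,L₂]`. -/
noncomputable def ksDx (L₁ : ℝ) (v : ℤ × ℤ → ℝ → ℝ) (p : ℤ × ℤ) (t : ℝ) : ℂ :=
  2 * (π : ℂ) * Complex.I * (p.1 : ℂ) / (L₁ : ℂ) * (v p t : ℂ)

/-- The exponential Fourier coefficients of `sin(2πx/L₁)`. -/
noncomputable def ksSin1 (p : ℤ × ℤ) : ℂ :=
  if p = (1, 0) then 1 / (2 * Complex.I)
  else if p = (-1, 0) then -(1 / (2 * Complex.I)) else 0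

/-- The exponential Fourier coefficients of `sin(4πx/L₁)`. -/
noncomputable def ksSin2 (p : ℤ × ℤ) : ℂ :=
  if p = (2, 0) then 1 / (2 * Complex.I)
  else if p = (-2, 0) then -(1 / (2 * Complex.I)) else 0

/-- Twice the `(1,0)` exponential Fourier coefficient of `Ψ₃ + Ψ₅ + Ψ₆`, i.e. the
coefficient of `cos(2πx/L₁)`, where `Ψ₃ = (∂ₓw)²`,
`Ψ₅ = −(4π a₁/L₁) sin(2πx/L₁) ∂ₓw` and `Ψ₆ = −(8π a₂/L₁) sin(4πx/L₁) ∂ₓw`. -/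
noncomputable def ksForcing (L₁ : ℝ) (a₁ a₂ : ℝ → ℝ) (v : ℤ × ℤ → ℝ → ℝ)
    (t : ℝ) : ℂ :=
  2 * ((∑' q : ℤ × ℤ, ksDx L₁ v ((1, 0) - q) t * ksDx L₁ v q t)
    + (-(4 * (π : ℂ) * (a₁ t : ℂ) / (L₁ : ℂ))) *
        (∑' q : ℤ × ℤ, ksSin1 ((1, 0) - q) * ksDx L₁ v q t)
    + (-(8 * (π : ℂ) * (a₂ t : ℂ) / (L₁ : ℂ))) *
        (∑' q : ℤ × ℤ, ksSin2 ((1, 0) - q) * ksDx L₁ v q t))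


/-! ### Auxiliary definitions and lemmas -/

noncomputable def ksG (ρ : ℝ) (v : ℤ × ℤ → ℝ → ℝ) (p : ℤ × ℤ) : ℝ :=
  Real.exp (ρ * (|(p.1 : ℝ)| + |(p.2 : ℝ)|)) * (1 + |(p.1 : ℝ)| + |(p.2 : ℝ)|) *
    ⨆ t : {t : ℝ // 0 ≤ t}, |v p t.1|

lemma ksSup_nonneg (v : ℤ × ℤ → ℝ → ℝ) (p : ℤ × ℤ) :
    0 ≤ ⨆ t : {t : ℝ // 0 ≤ t}, |v p t.1| :=
  Real.iSup_nonneg fun _ => abs_nonneg _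

lemma ksG_nonneg (ρ : ℝ) (v : ℤ × ℤ → ℝ → ℝ) (p : ℤ × ℤ) : 0 ≤ ksG ρ v p := by
  have h0 := ksSup_nonneg v p
  have h1 : (0:ℝ) ≤ 1 + |(p.1 : ℝ)| + |(p.2 : ℝ)| := by positivity
  exact mul_nonneg (mul_nonneg (Real.exp_pos _).le h1) h0

lemma ksG_eq_zero (ρ : ℝ) (v : ℤ × ℤ → ℝ → ℝ) (p : ℤ × ℤ)
    (hv : ∀ t : ℝ, v p t = 0) : ksG ρ v p = 0 := by
  haveI : Nonempty {t : ℝ // 0 ≤ t} := ⟨⟨0, le_refl 0⟩⟩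
  unfold ksG
  have : (⨆ t : {t : ℝ // 0 ≤ t}, |v p t.1|) = 0 := by
    simp only [hv, abs_zero, ciSup_const]
  rw [this, mul_zero]

lemma ks_abs_v_le (ρ : ℝ) (v : ℤ × ℤ → ℝ → ℝ)
    (hbdd : ∀ p : ℤ × ℤ, BddAbove (Set.range fun t : {t : ℝ // 0 ≤ t} => |v p t.1|))
    (p : ℤ × ℤ) (t : ℝ) (ht : 0 ≤ t) :
    |(p.1 : ℝ)| * |v p t| ≤
      Real.exp (-(ρ * (|(p.1 : ℝ)| + |(p.2 : ℝ)|))) * ksG ρ v p := by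
  have hsup : |v p t| ≤ ⨆ t : {t : ℝ // 0 ≤ t}, |v p t.1| :=
    le_ciSup (hbdd p) ⟨t, ht⟩
  have hsupnn := ksSup_nonneg v p
  have hx : Real.exp (-(ρ * (|(p.1 : ℝ)| + |(p.2 : ℝ)|))) *
      Real.exp (ρ * (|(p.1 : ℝ)| + |(p.2 : ℝ)|)) = 1 := by
    rw [← Real.exp_add]; simp
  have h1 : |(p.1 : ℝ)| ≤ 1 + |(p.1 : ℝ)| + |(p.2 : ℝ)| := by
    have := abs_nonneg ((p.2 : ℝ)); linarith
  calc |(p.1 : ℝ)| * |v p t|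
      ≤ (1 + |(p.1 : ℝ)| + |(p.2 : ℝ)|) * ⨆ t : {t : ℝ // 0 ≤ t}, |v p t.1| := by
        apply mul_le_mul h1 hsup (abs_nonneg _) (by positivity)
    _ = Real.exp (-(ρ * (|(p.1 : ℝ)| + |(p.2 : ℝ)|))) * ksG ρ v p := by
        unfold ksG
        rw [show Real.exp (-(ρ * (|(p.1 : ℝ)| + |(p.2 : ℝ)|))) *
            (Real.exp (ρ * (|(p.1 : ℝ)| + |(p.2 : ℝ)|)) * (1 + |(p.1 : ℝ)| + |(p.2 : ℝ)|) *
              ⨆ t : {t : ℝ // 0 ≤ t}, |v p t.1|) =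
            (Real.exp (-(ρ * (|(p.1 : ℝ)| + |(p.2 : ℝ)|))) *
              Real.exp (ρ * (|(p.1 : ℝ)| + |(p.2 : ℝ)|))) *
              ((1 + |(p.1 : ℝ)| + |(p.2 : ℝ)|) *
                ⨆ t : {t : ℝ // 0 ≤ t}, |v p t.1|) from by ring, hx, one_mul]

lemma ksDx_abs (L₁ : ℝ) (hL : 0 < L₁) (v : ℤ × ℤ → ℝ → ℝ) (p : ℤ × ℤ) (t : ℝ) :
    ‖ksDx L₁ v p t‖ = 2 * π / L₁ * (|(p.1 : ℝ)| * |v p t|) := by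
  simp [ksDx, norm_mul, norm_div, Complex.norm_real, Complex.norm_intCast, Real.norm_eq_abs,
    abs_of_pos Real.pi_pos, abs_of_pos hL]
  ring

lemma ksProd_abs_le (ρ : ℝ) (hρ : 0 ≤ ρ) (L₁ : ℝ) (hL : 0 < L₁)
    (v : ℤ × ℤ → ℝ → ℝ)
    (hbdd : ∀ p : ℤ × ℤ, BddAbove (Set.range fun t : {t : ℝ // 0 ≤ t} => |v p t.1|))
    (q : ℤ × ℤ) (t : ℝ) (ht : 0 ≤ t) :
    ‖ksDx L₁ v ((1, 0) - q) t * ksDx L₁ v q t‖ ≤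
      (2 * π / L₁) ^ 2 * Real.exp (-ρ) *
        (ksG ρ v ((1, 0) - q) * ksG ρ v q) := by
  set p : ℤ × ℤ := (1, 0) - q with hp
  have h1 : ‖ksDx L₁ v p t * ksDx L₁ v q t‖
      = (2 * π / L₁) ^ 2 * ((|(p.1 : ℝ)| * |v p t|) * (|(q.1 : ℝ)| * |v q t|)) := by
    rw [norm_mul, ksDx_abs L₁ hL, ksDx_abs L₁ hL]; ring
  rw [h1]
  have h2 := ks_abs_v_le ρ v hbdd p t ht
  have h3 := ks_abs_v_le ρ v hbdd q t ht
  have h4 : (|(p.1 : ℝ)| * |v p t|) * (|(q.1 : ℝ)| * |v q t|) ≤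
      (Real.exp (-(ρ * (|(p.1 : ℝ)| + |(p.2 : ℝ)|))) * ksG ρ v p) *
      (Real.exp (-(ρ * (|(q.1 : ℝ)| + |(q.2 : ℝ)|))) * ksG ρ v q) := by
    apply mul_le_mul h2 h3 (mul_nonneg (abs_nonneg _) (abs_nonneg _))
    exact mul_nonneg (Real.exp_pos _).le (ksG_nonneg ρ v p)
  have h5 : (Real.exp (-(ρ * (|(p.1 : ℝ)| + |(p.2 : ℝ)|))) *
      Real.exp (-(ρ * (|(q.1 : ℝ)| + |(q.2 : ℝ)|)))) ≤ Real.exp (-ρ) := by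
    rw [← Real.exp_add]
    apply Real.exp_le_exp.mpr
    have habs : (1:ℝ) ≤ |(p.1 : ℝ)| + |(q.1 : ℝ)| := by
      have hpq : p.1 = 1 - q.1 := by simp [hp]
      rw [hpq]
      have := abs_add_le (1 - (q.1 : ℝ)) ((q.1 : ℝ))
      push_cast
      simp at this
      linarith
    have hnn : 0 ≤ |(p.2 : ℝ)| + |(q.2 : ℝ)| := by positivity
    nlinarith
  calc (2 * π / L₁) ^ 2 * ((|(p.1 : ℝ)| * |v p t|) * (|(q.1 : ℝ)| * |v q t|))
      ≤ (2 * π / L₁) ^ 2 * ((Real.exp (-(ρ * (|(p.1 : ℝ)| + |(p.2 : ℝ)|))) * ksG ρ v p) *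
        (Real.exp (-(ρ * (|(q.1 : ℝ)| + |(q.2 : ℝ)|))) * ksG ρ v q)) := by
        apply mul_le_mul_of_nonneg_left h4 (by positivity)
    _ = (2 * π / L₁) ^ 2 * ((Real.exp (-(ρ * (|(p.1 : ℝ)| + |(p.2 : ℝ)|))) *
          Real.exp (-(ρ * (|(q.1 : ℝ)| + |(q.2 : ℝ)|)))) * (ksG ρ v p * ksG ρ v q)) := by ring
    _ ≤ (2 * π / L₁) ^ 2 * (Real.exp (-ρ) * (ksG ρ v p * ksG ρ v q)) := by
        apply mul_le_mul_of_nonneg_left _ (by positivity)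
        exact mul_le_mul_of_nonneg_right h5
          (mul_nonneg (ksG_nonneg ρ v p) (ksG_nonneg ρ v q))
    _ = (2 * π / L₁) ^ 2 * Real.exp (-ρ) * (ksG ρ v p * ksG ρ v q) := by ring

lemma ksS3_bound (ρ : ℝ) (hρ : 0 ≤ ρ) (L₁ : ℝ) (hL : 0 < L₁)
    (v : ℤ × ℤ → ℝ → ℝ)
    (hbdd : ∀ p : ℤ × ℤ, BddAbove (Set.range fun t : {t : ℝ // 0 ≤ t} => |v p t.1|))
    (hgsum : Summable (ksG ρ v)) (t : ℝ) (ht : 0 ≤ t) :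
    ‖∑' q : ℤ × ℤ, ksDx L₁ v ((1, 0) - q) t * ksDx L₁ v q t‖ ≤
      (2 * π / L₁) ^ 2 * Real.exp (-ρ) * (∑' p : ℤ × ℤ, ksG ρ v p) ^ 2 := by
  set G := ∑' p : ℤ × ℤ, ksG ρ v p with hG
  set C := (2 * π / L₁) ^ 2 * Real.exp (-ρ) with hC
  have hCnn : 0 ≤ C := by positivity
  have hGnn : 0 ≤ G := tsum_nonneg (ksG_nonneg ρ v)
  have hgleG : ∀ p, ksG ρ v p ≤ G := fun p =>
    Summable.le_tsum hgsum p (fun j _ => ksG_nonneg ρ v j)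
  set f := fun q : ℤ × ℤ => ksDx L₁ v ((1, 0) - q) t * ksDx L₁ v q t with hf
  set h := fun q : ℤ × ℤ => C * (ksG ρ v ((1, 0) - q) * ksG ρ v q) with hh
  have hfh : ∀ q, ‖f q‖ ≤ h q := fun q =>
    ksProd_abs_le ρ hρ L₁ hL v hbdd q t ht
  have hhle : ∀ q, h q ≤ (C * G) * ksG ρ v q := by
    intro q
    have := mul_le_mul_of_nonneg_right (hgleG ((1, 0) - q)) (ksG_nonneg ρ v q)
    calc h q ≤ C * (G * ksG ρ v q) := mul_le_mul_of_nonneg_left this hCnn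
      _ = (C * G) * ksG ρ v q := by ring
  have hhnn : ∀ q, 0 ≤ h q :=
    fun q => mul_nonneg hCnn (mul_nonneg (ksG_nonneg ρ v _) (ksG_nonneg ρ v _))
  have hsummul : Summable (fun q : ℤ × ℤ => (C * G) * ksG ρ v q) := hgsum.mul_left _
  have hhsum : Summable h := Summable.of_nonneg_of_le hhnn hhle hsummul
  have habssum : Summable (fun q => ‖f q‖) :=
    Summable.of_nonneg_of_le (fun q => norm_nonneg _) hfh hhsum
  have h1 : ‖∑' q, f q‖ ≤ ∑' q, ‖f q‖ := by
    have := norm_tsum_le_tsum_norm (f := f) (by simpa using habssum)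
    simpa using this
  have h2 : ∑' q, ‖f q‖ ≤ ∑' q, h q := Summable.tsum_le_tsum hfh habssum hhsum
  have h3 : ∑' q, h q ≤ ∑' q, (C * G) * ksG ρ v q := Summable.tsum_le_tsum hhle hhsum hsummul
  have h4 : ∑' q : ℤ × ℤ, (C * G) * ksG ρ v q = C * G ^ 2 := by
    rw [tsum_mul_left, ← hG]; ring
  calc ‖∑' q, f q‖ ≤ ∑' q, ‖f q‖ := h1
    _ ≤ ∑' q, h q := h2
    _ ≤ ∑' q, (C * G) * ksG ρ v q := h3
    _ = C * G ^ 2 := h4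

lemma ksS5_eq_zero (L₁ : ℝ) (v : ℤ × ℤ → ℝ → ℝ)
    (hv0 : ∀ p ∈ ksLowModes, ∀ t : ℝ, v p t = 0) (t : ℝ) :
    (∑' q : ℤ × ℤ, ksSin1 ((1, 0) - q) * ksDx L₁ v q t) = 0 := by
  have hterm : ∀ q : ℤ × ℤ, ksSin1 ((1, 0) - q) * ksDx L₁ v q t = 0 := by
    rintro ⟨q1, q2⟩
    by_cases h1 : (q1, q2) = ((0 : ℤ), (0 : ℤ))
    · rw [h1]; simp [ksDx]
    by_cases h2 : (q1, q2) = ((2 : ℤ), (0 : ℤ))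
    · rw [h2]
      have hv : v (2, 0) t = 0 := hv0 (2, 0) (by simp [ksLowModes]) t
      simp [ksDx, hv]
    · have e1 : ((1, 0) : ℤ × ℤ) - (q1, q2) = (1 - q1, -q2) := by
        rw [Prod.mk_sub_mk]; norm_num
      have n1 : ((1 - q1, -q2) : ℤ × ℤ) ≠ (1, 0) := by
        intro h; apply h1
        rw [Prod.mk.injEq] at h ⊢; constructor <;> omega
      have n2 : ((1 - q1, -q2) : ℤ × ℤ) ≠ (-1, 0) := by
        intro h; apply h2
        rw [Prod.mk.injEq] at h ⊢; constructor <;> omega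
      rw [e1, ksSin1, if_neg n1, if_neg n2, zero_mul]
  exact (tsum_congr hterm).trans tsum_zero

lemma ksS6_eq (L₁ : ℝ) (v : ℤ × ℤ → ℝ → ℝ)
    (hv0 : ∀ p ∈ ksLowModes, ∀ t : ℝ, v p t = 0) (t : ℝ) :
    (∑' q : ℤ × ℤ, ksSin2 ((1, 0) - q) * ksDx L₁ v q t) =
      -(1 / (2 * Complex.I)) * ksDx L₁ v (3, 0) t := by
  have h := tsum_eq_single (L := SummationFilter.unconditional _) (f := fun q : ℤ × ℤ => ksSin2 ((1, 0) - q) * ksDx L₁ v q t)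
    ((3, 0) : ℤ × ℤ) ?_
  · rw [h]
    have e1 : ((1, 0) : ℤ × ℤ) - (3, 0) = (-2, 0) := by
      rw [Prod.mk_sub_mk]; norm_num
    rw [e1, ksSin2]
    norm_num
  · rintro ⟨q1, q2⟩ hq
    by_cases h1 : (q1, q2) = ((-1 : ℤ), (0 : ℤ))
    · rw [h1]
      have hv : v (-1, 0) t = 0 := hv0 (-1, 0) (by simp [ksLowModes]) t
      simp [ksDx, hv]
    · show ksSin2 ((1, 0) - (q1, q2)) * ksDx L₁ v (q1, q2) t = 0
      have e1 : ((1, 0) : ℤ × ℤ) - (q1, q2) = (1 - q1, -q2) := by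
        rw [Prod.mk_sub_mk]; norm_num
      have n1 : ((1 - q1, -q2) : ℤ × ℤ) ≠ (2, 0) := by
        intro h; apply h1
        rw [Prod.mk.injEq] at h ⊢; constructor <;> omega
      have n2 : ((1 - q1, -q2) : ℤ × ℤ) ≠ (-2, 0) := by
        intro h; apply hq
        rw [Prod.mk.injEq] at h ⊢; constructor <;> omega
      rw [e1, ksSin2, if_neg n1, if_neg n2, zero_mul]

lemma ksS6_abs_le (ρ : ℝ) (hρ : 0 ≤ ρ) (L₁ : ℝ) (hL : 0 < L₁)
    (v : ℤ × ℤ → ℝ → ℝ)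
    (hv0 : ∀ p ∈ ksLowModes, ∀ t : ℝ, v p t = 0)
    (hbdd : ∀ p : ℤ × ℤ, BddAbove (Set.range fun t : {t : ℝ // 0 ≤ t} => |v p t.1|))
    (hgsum : Summable (ksG ρ v)) (t : ℝ) (ht : 0 ≤ t) :
    ‖∑' q : ℤ × ℤ, ksSin2 ((1, 0) - q) * ksDx L₁ v q t‖ ≤
      (π / L₁) * Real.exp (-ρ) * (∑' p : ℤ × ℤ, ksG ρ v p) := by
  rw [ksS6_eq L₁ v hv0 t, norm_mul]
  have habs1 : ‖-(1 / (2 * Complex.I))‖ = 1 / 2 := by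
    simp
  rw [habs1, ksDx_abs L₁ hL]
  have hkey := ks_abs_v_le ρ v hbdd (3, 0) t ht
  have hc3 : |(((3, 0) : ℤ × ℤ).1 : ℝ)| = 3 := by norm_num
  have hc0 : |(((3, 0) : ℤ × ℤ).2 : ℝ)| = 0 := by norm_num
  rw [hc3, hc0] at hkey
  have hgle : ksG ρ v (3, 0) ≤ ∑' p : ℤ × ℤ, ksG ρ v p :=
    Summable.le_tsum hgsum _ (fun j _ => ksG_nonneg ρ v j)
  have hexple : Real.exp (-(ρ * (3 + 0))) ≤ Real.exp (-ρ) := by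
    apply Real.exp_le_exp.mpr; linarith
  have h2 : (3 : ℝ) * |v (3, 0) t| ≤
      Real.exp (-ρ) * (∑' p : ℤ × ℤ, ksG ρ v p) := by
    calc (3 : ℝ) * |v (3, 0) t| ≤ Real.exp (-(ρ * (3 + 0))) * ksG ρ v (3, 0) := hkey
      _ ≤ Real.exp (-ρ) * (∑' p : ℤ × ℤ, ksG ρ v p) :=
        mul_le_mul hexple hgle (ksG_nonneg ρ v _) (Real.exp_pos _).le
  have hπ := Real.pi_pos
  calc (1 : ℝ) / 2 * (2 * π / L₁ * (|(((3, 0) : ℤ × ℤ).1 : ℝ)| * |v (3, 0) t|))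
      = (π / L₁) * ((3 : ℝ) * |v (3, 0) t|) := by rw [hc3]; field_simp
    _ ≤ (π / L₁) * (Real.exp (-ρ) * (∑' p : ℤ × ℤ, ksG ρ v p)) :=
        mul_le_mul_of_nonneg_left h2 (by positivity)
    _ = (π / L₁) * Real.exp (-ρ) * (∑' p : ℤ × ℤ, ksG ρ v p) := by ring

set_option maxHeartbeats 1000000 in
/-- The forcing term `F_{1,0,x}` in the equation for the growing mode `a_{1,0}`
is of size `K ε²`. -/
theorem stmt_16 (ρ : ℝ) (hρ : 0 < ρ) (L₁ L₂ : ℝ)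
    (hL₁ : 2 * π < L₁) (hL₁' : L₁ < 4 * π) (hL₂ : 2 * π < L₂) (hL₂' : L₂ < 4 * π)
    (hsum : (2 * π / L₁) ^ 2 + (2 * π / L₂) ^ 2 > 1)
    (K₁ : ℝ) (hK₁pos : 0 < K₁)
    (hK₁ : ∀ p : ℤ × ℤ, p ∉ ksLowModes →
      1 + |(p.1 : ℝ)| + |(p.2 : ℝ)| ≤ K₁ * (-(ksSymbol L₁ L₂ p))) :
    ∃ εstar : ℝ, 0 < εstar ∧
      ∀ ε : ℝ, 0 < ε → ε < εstar →
        ∀ (a₁ a₂ : ℝ → ℝ) (v : ℤ × ℤ → ℝ → ℝ),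
          (∀ t : ℝ, 0 ≤ t → |a₁ t| ≤ 2 * Real.sqrt (ksM₁ L₁ * ε)) →
          (∀ t : ℝ, 0 ≤ t → |a₂ t| ≤ ksM₂ L₁ * ε) →
          (∀ p ∈ ksLowModes, ∀ t : ℝ, v p t = 0) →
          (∀ p : ℤ × ℤ,
            BddAbove (Set.range fun t : {t : ℝ // 0 ≤ t} => |v p t.1|)) →
          Summable (fun p : {p : ℤ × ℤ // p ∉ ksLowModes} =>
            Real.exp (ρ * (|(p.1.1 : ℝ)| + |(p.1.2 : ℝ)|)) *
              (1 + |(p.1.1 : ℝ)| + |(p.1.2 : ℝ)|) *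
              ⨆ t : {t : ℝ // 0 ≤ t}, |v p.1 t.1|) →
          (∑' p : {p : ℤ × ℤ // p ∉ ksLowModes},
              Real.exp (ρ * (|(p.1.1 : ℝ)| + |(p.1.2 : ℝ)|)) *
                (1 + |(p.1.1 : ℝ)| + |(p.1.2 : ℝ)|) *
                ⨆ t : {t : ℝ // 0 ≤ t}, |v p.1 t.1|) ≤
            (12 * K₁ * ksK₂ ρ L₁ L₂ *
              max (Real.sqrt (ksM₁ L₁) * ksM₂ L₁) (Real.sqrt (ksM₁ L₂) * ksM₂ L₂))
              * ε ^ ((3 : ℝ) / 2) →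
          ∀ t : ℝ, 0 ≤ t →
            ‖ksForcing L₁ a₁ a₂ v t‖ ≤
              (3 * Real.sqrt (ksM₁ L₁) *
                (12 * K₁ * ksK₂ ρ L₁ L₂ *
                  max (Real.sqrt (ksM₁ L₁) * ksM₂ L₁)
                    (Real.sqrt (ksM₁ L₂) * ksM₂ L₂)) *
                ksK₂ ρ L₁ L₂ * Real.exp (-ρ)) * ε ^ 2 := by
  have hπ := Real.pi_pos
  have hL₁0 : 0 < L₁ := lt_trans (by positivity) hL₁
  have hB₁ : 0 < ksB L₁ := by
    unfold ksB
    have hx0 : 0 < 4 * π / L₁ := by positivity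
    have hx1 : 1 < 4 * π / L₁ := by
      rw [lt_div_iff₀ hL₁0]; linarith
    have h2 : 1 < (4 * π / L₁) ^ 2 := by nlinarith
    nlinarith [mul_pos (mul_pos hx0 hx0) (sub_pos.mpr h2)]
  have hM₁pos : 0 < ksM₁ L₁ := by unfold ksM₁; positivity
  have hsqrt₁ : 0 < Real.sqrt (ksM₁ L₁) := Real.sqrt_pos.mpr hM₁pos
  have hM₂pos : 0 < ksM₂ L₁ := by unfold ksM₂; positivity
  have hK₂pos : 0 < ksK₂ ρ L₁ L₂ := by
    have h1 : 0 < (4 * π / L₁) * Real.exp ρ := by positivity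
    have h2 : (4 * π / L₁) * Real.exp ρ ≤ ksK₂ ρ L₁ L₂ :=
      le_trans (le_trans (le_max_left _ _) (le_max_right _ _)) (le_max_left _ _)
    linarith
  set M₃ := 12 * K₁ * ksK₂ ρ L₁ L₂ *
      max (Real.sqrt (ksM₁ L₁) * ksM₂ L₁) (Real.sqrt (ksM₁ L₂) * ksM₂ L₂) with hM₃def
  have hmaxpos : 0 < max (Real.sqrt (ksM₁ L₁) * ksM₂ L₁)
      (Real.sqrt (ksM₁ L₂) * ksM₂ L₂) :=
    lt_of_lt_of_le (mul_pos hsqrt₁ hM₂pos) (le_max_left _ _)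
  have hM₃pos : 0 < M₃ := by
    rw [hM₃def]
    exact mul_pos (by positivity) hmaxpos
  set K' := 3 * Real.sqrt (ksM₁ L₁) * M₃ * ksK₂ ρ L₁ L₂ with hK'def
  have hK'pos : 0 < K' := by
    rw [hK'def]
    exact mul_pos (mul_pos (by positivity) hM₃pos) hK₂pos
  set C := 2 * (2 * π / L₁) ^ 2 * M₃ ^ 2 + 16 * π ^ 2 / L₁ ^ 2 * (ksM₂ L₁ * M₃)
    with hCdef
  have hCpos : 0 < C := by
    rw [hCdef]
    exact add_pos (mul_pos (by positivity) (pow_pos hM₃pos 2))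
      (mul_pos (by positivity) (mul_pos hM₂pos hM₃pos))
  refine ⟨min 1 ((K' / C) ^ 2), lt_min one_pos (by positivity), ?_⟩
  intro ε hε hεlt a₁ a₂ v ha₁ ha₂ hv0 hbdd hsm hN t ht
  have hε1 : ε ≤ 1 := le_of_lt (lt_of_lt_of_le hεlt (min_le_left _ _))
  have hεK : ε < (K' / C) ^ 2 := lt_of_lt_of_le hεlt (min_le_right _ _)
  -- facts about G
  have hg0 : ∀ p ∈ ksLowModes, ksG ρ v p = 0 := fun p hp => ksG_eq_zero ρ v p (hv0 p hp)
  have hgsum : Summable (ksG ρ v) := by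
    refine (summable_subtype_and_compl (s := ksLowModes)).mp ⟨?_, ?_⟩
    · have hz : (fun x : ksLowModes => ksG ρ v x) = fun _ => 0 :=
        funext fun x => hg0 x x.2
      rw [hz]; exact summable_zero
    · exact hsm
  have hGnn : 0 ≤ ∑' p : ℤ × ℤ, ksG ρ v p := tsum_nonneg (ksG_nonneg ρ v)
  have hsupp : Function.support (ksG ρ v) ⊆ ksLowModesᶜ := by
    intro p hp
    simp only [Set.mem_compl_iff]
    intro hmem; exact hp (hg0 p hmem)
  have hGle : (∑' p : ℤ × ℤ, ksG ρ v p) ≤ M₃ * ε ^ ((3 : ℝ) / 2) := by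
    rw [← tsum_subtype_eq_of_support_subset hsupp]
    exact hN
  -- facts about s = √ε
  set s := ε ^ ((1 : ℝ) / 2) with hsdef
  have hspos : 0 < s := Real.rpow_pos_of_pos hε _
  have hs1 : s ≤ 1 := Real.rpow_le_one hε.le hε1 (by norm_num)
  have hs2 : s ^ 2 = ε := by
    rw [hsdef, ← Real.rpow_natCast (ε ^ ((1 : ℝ) / 2)) 2, ← Real.rpow_mul hε.le]
    norm_num
  have hs3 : ε ^ ((3 : ℝ) / 2) = s ^ 3 := by
    rw [hsdef, ← Real.rpow_natCast (ε ^ ((1 : ℝ) / 2)) 3, ← Real.rpow_mul hε.le]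
    norm_num
  have hsK : C * s ≤ K' := by
    have h1 : s < K' / C := by
      apply lt_of_pow_lt_pow_left₀ 2 (by positivity)
      rw [hs2]; exact hεK
    calc C * s ≤ C * (K' / C) := mul_le_mul_of_nonneg_left h1.le hCpos.le
      _ = K' := by field_simp
  have hGle' : (∑' p : ℤ × ℤ, ksG ρ v p) ≤ M₃ * s ^ 3 := by rw [← hs3]; exact hGle
  -- the three pieces
  have hS3 := ksS3_bound ρ hρ.le L₁ hL₁0 v hbdd hgsum t ht
  have hS6 := ksS6_abs_le ρ hρ.le L₁ hL₁0 v hv0 hbdd hgsum t ht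
  have hS5 := ksS5_eq_zero L₁ v hv0 t
  rw [ksForcing, hS5, mul_zero, add_zero]
  have hc6 : ‖-(8 * (π : ℂ) * ((a₂ t : ℝ) : ℂ) / ((L₁ : ℝ) : ℂ))‖ =
      8 * π * |a₂ t| / L₁ := by
    rw [norm_neg, norm_div, norm_mul, norm_mul, Complex.norm_real,
      Complex.norm_real, Complex.norm_real]
    rw [Real.norm_of_nonneg hπ.le, Real.norm_of_nonneg hL₁0.le]
    norm_num [Real.norm_eq_abs]
  set S3 := ∑' q : ℤ × ℤ, ksDx L₁ v ((1, 0) - q) t * ksDx L₁ v q t with hS3def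
  set S6 := ∑' q : ℤ × ℤ, ksSin2 ((1, 0) - q) * ksDx L₁ v q t with hS6def
  set G := ∑' p : ℤ × ℤ, ksG ρ v p with hGdef
  have ha₂t := ha₂ t ht
  have ha₂nn : 0 ≤ |a₂ t| := abs_nonneg _
  have step1 : ‖2 * (S3 + -(8 * (π : ℂ) * ((a₂ t : ℝ) : ℂ) /
      ((L₁ : ℝ) : ℂ)) * S6)‖ ≤
      2 * (‖S3‖ + (8 * π * |a₂ t| / L₁) * ‖S6‖) := by
    rw [norm_mul, Complex.norm_two]
    have htri := norm_add_le S3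
      (-(8 * (π : ℂ) * ((a₂ t : ℝ) : ℂ) / ((L₁ : ℝ) : ℂ)) * S6)
    rw [norm_mul, hc6] at htri
    linarith
  have step2 : 2 * (‖S3‖ + (8 * π * |a₂ t| / L₁) * ‖S6‖) ≤
      2 * ((2 * π / L₁) ^ 2 * Real.exp (-ρ) * (M₃ * s ^ 3) ^ 2 +
        (8 * π * (ksM₂ L₁ * ε) / L₁) * ((π / L₁) * Real.exp (-ρ) * (M₃ * s ^ 3))) := by
    have hGsq : G ^ 2 ≤ (M₃ * s ^ 3) ^ 2 := pow_le_pow_left₀ hGnn hGle' 2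
    have e1 : ‖S3‖ ≤ (2 * π / L₁) ^ 2 * Real.exp (-ρ) * (M₃ * s ^ 3) ^ 2 :=
      le_trans hS3 (mul_le_mul_of_nonneg_left hGsq (by positivity))
    have e2 : (8 * π * |a₂ t| / L₁) * ‖S6‖ ≤
        (8 * π * (ksM₂ L₁ * ε) / L₁) * ((π / L₁) * Real.exp (-ρ) * (M₃ * s ^ 3)) := by
      apply mul_le_mul
      · gcongr
      · exact le_trans hS6 (mul_le_mul_of_nonneg_left hGle' (by positivity))
      · exact norm_nonneg _
      · positivity
    linarith
  have step3 : 2 * ((2 * π / L₁) ^ 2 * Real.exp (-ρ) * (M₃ * s ^ 3) ^ 2 +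
      (8 * π * (ksM₂ L₁ * ε) / L₁) * ((π / L₁) * Real.exp (-ρ) * (M₃ * s ^ 3))) ≤
      (3 * Real.sqrt (ksM₁ L₁) * M₃ * ksK₂ ρ L₁ L₂ * Real.exp (-ρ)) * ε ^ 2 := by
    rw [← hs2]
    have hexp := Real.exp_pos (-ρ)
    have lhs_eq : 2 * ((2 * π / L₁) ^ 2 * Real.exp (-ρ) * (M₃ * s ^ 3) ^ 2 +
        (8 * π * (ksM₂ L₁ * s ^ 2) / L₁) * ((π / L₁) * Real.exp (-ρ) * (M₃ * s ^ 3))) =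
        Real.exp (-ρ) * s ^ 4 *
          (2 * (2 * π / L₁) ^ 2 * M₃ ^ 2 * s ^ 2 +
            16 * π ^ 2 / L₁ ^ 2 * (ksM₂ L₁ * M₃) * s) := by
      ring
    rw [lhs_eq]
    have inner : 2 * (2 * π / L₁) ^ 2 * M₃ ^ 2 * s ^ 2 +
        16 * π ^ 2 / L₁ ^ 2 * (ksM₂ L₁ * M₃) * s ≤ C * s := by
      rw [hCdef]
      have hss : s ^ 2 ≤ s := by
        have h := mul_le_mul_of_nonneg_right hs1 hspos.le
        rw [one_mul] at h
        calc s ^ 2 = s * s := by ring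
          _ ≤ s := h
      have c1 : 0 ≤ 2 * (2 * π / L₁) ^ 2 * M₃ ^ 2 := by positivity
      have h1 := mul_le_mul_of_nonneg_left hss c1
      linarith
    calc Real.exp (-ρ) * s ^ 4 *
          (2 * (2 * π / L₁) ^ 2 * M₃ ^ 2 * s ^ 2 +
            16 * π ^ 2 / L₁ ^ 2 * (ksM₂ L₁ * M₃) * s)
        ≤ Real.exp (-ρ) * s ^ 4 * (C * s) :=
          mul_le_mul_of_nonneg_left inner (by positivity)
      _ ≤ Real.exp (-ρ) * s ^ 4 * K' :=
          mul_le_mul_of_nonneg_left hsK (by positivity)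
      _ = (3 * Real.sqrt (ksM₁ L₁) * M₃ * ksK₂ ρ L₁ L₂ * Real.exp (-ρ)) * (s ^ 2) ^ 2 := by
          rw [hK'def]; ring
  exact le_trans step1 (le_trans step2 step3)
end
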